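/- For m ≥ 2 and i, j ≥ 0, the product e_i · s_{(m,1^j)} equals \sum_{x=0}^{min(i-1,j)} s_{(m+1,2^x,1^{i+j-1-2x})} + \sum_{x=0}^{min(i,j)} s_{(m,2^x,1^{i+j-2x})}. -/

import Mathlib

open MvPolynomial Finset

noncomputable section

/-- The ring of symmetric functions, as the free polynomial ring generated by the
complete homogeneous symmetric functions `h₁, h₂, …` (variable `n` is `h_{n+1}`). -/
abbrev SymF := MvPolynomial ℕ ℤ

/-- The complete homogeneous symmetric function `h_n`, with `h_n = 0` for `n < 0`. -/
def hh : ℤ → SymF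
  | Int.ofNat 0 => 1
  | Int.ofNat (n+1) => X n
  | Int.negSucc _ => 0

/-- The Schur function `s_λ` for `λ = (lam 0, lam 1, …, lam (l-1))`, defined by the
Jacobi–Trudi determinant `det (h_{λ_i - i + j})₁≤i,j≤l`. -/
def schur (l : ℕ) (lam : Fin l → ℕ) : SymF :=
  Matrix.det (Matrix.of fun i j : Fin l => hh ((lam i : ℤ) + (j : ℤ) - (i : ℤ)))

/-- The elementary symmetric function `e_n = s_{(1^n)}`. -/
def ee (n : ℕ) : SymF := schur n (fun _ => 1)

/-- The skew Schur function `s_{λ/μ}`, via the Jacobi–Trudi determinant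
`det (h_{λ_i - μ_j - i + j})`. -/
def skewSchur (l : ℕ) (lam mu : Fin l → ℕ) : SymF :=
  Matrix.det (Matrix.of fun i j : Fin l =>
    hh ((lam i : ℤ) - (mu j : ℤ) + (j : ℤ) - (i : ℤ)))

-- basics
lemma hh_zero : hh 0 = 1 := rfl

lemma hh_neg {n : ℤ} (h : n < 0) : hh n = 0 := by
  cases n with
  | ofNat k => rw [Int.ofNat_eq_natCast] at h; omega
  | negSucc k => rfl

def E : ℤ → SymF := fun n => if 0 ≤ n then ee n.toNat else 0

lemma E_coe (n : ℕ) : E (n : ℤ) = ee n := by simp [E]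

lemma E_neg {n : ℤ} (h : n < 0) : E n = 0 := by simp [E, not_le.mpr h]

lemma ee_zero : ee 0 = 1 := by
  simp [ee, schur, Matrix.det_isEmpty]

lemma E_zero : E 0 = 1 := by
  simpa using (E_coe 0).trans ee_zero

lemma ee_eq (n : ℕ) : ee n = Matrix.det (Matrix.of fun i j : Fin n => hh (1 + (j : ℤ) - (i : ℤ))) := by
  unfold ee schur
  norm_num

def Hm (N : ℕ) : Matrix (Fin N) (Fin N) SymF := Matrix.of fun i j => hh ((j : ℤ) - (i : ℤ))

def Em (N : ℕ) : Matrix (Fin N) (Fin N) SymF :=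
  Matrix.of fun i j => (-1 : SymF) ^ ((i : ℕ) + (j : ℕ)) * E ((j : ℤ) - (i : ℤ))

lemma detHm (N : ℕ) : (Hm N).det = 1 := by
  rw [Matrix.det_of_upperTriangular (M := Hm N) ?_]
  · simp [Hm, hh_zero]
  · intro i j hij
    simp only [Hm, Matrix.of_apply]
    exact hh_neg (by simp at hij ⊢; omega)

lemma coe_succAbove {n : ℕ} (p : Fin (n+1)) (i : Fin n) :
    ((p.succAbove i : Fin (n+1)) : ℕ) = if (i : ℕ) < (p : ℕ) then (i : ℕ) else (i : ℕ) + 1 := by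
  rw [Fin.succAbove]
  split_ifs with h1 h2 h3
  · rfl
  · exact absurd (by simpa [Fin.lt_def] using h1) h2
  · exact absurd (by simpa [Fin.lt_def] using h3) h1
  · rfl

-- minor of the e-matrix
lemma eeMinor (d : ℕ) (j : Fin (d+1)) :
    Matrix.det ((Matrix.of fun i c : Fin (d+1) => hh (1 + (c : ℤ) - (i : ℤ))).submatrix
      Fin.succ j.succAbove) = ee (d - (j : ℕ)) := by
  have hle : (j : ℕ) ≤ d := Nat.lt_succ_iff.mp j.isLt
  set b := d - (j : ℕ) with hb
  have hjb : (j : ℕ) + b = d := by omega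
  let eqv : (Fin (j : ℕ) ⊕ Fin b) ≃ Fin d := (finSumFinEquiv).trans (finCongr hjb)
  rw [← Matrix.det_submatrix_equiv_self eqv]
  have key : ((Matrix.of fun i c : Fin (d+1) => hh (1 + (c : ℤ) - (i : ℤ))).submatrix
      Fin.succ j.succAbove).submatrix eqv eqv =
      Matrix.fromBlocks
        (Matrix.of fun a c : Fin (j : ℕ) => hh ((c : ℤ) - (a : ℤ)))
        (Matrix.of fun (a : Fin (j : ℕ)) (c : Fin b) => hh ((j : ℕ) + (c : ℤ) + 1 - (a : ℤ)))
        0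
        (Matrix.of fun a c : Fin b => hh (1 + (c : ℤ) - (a : ℤ))) := by
    apply Matrix.ext
    rintro (i | i) (c | c) <;>
      simp only [Matrix.submatrix_apply, Matrix.fromBlocks_apply₁₁, Matrix.fromBlocks_apply₁₂,
        Matrix.fromBlocks_apply₂₁, Matrix.fromBlocks_apply₂₂, Matrix.of_apply, eqv,
        Equiv.trans_apply, finSumFinEquiv_apply_left, finSumFinEquiv_apply_right,
        finCongr_apply, Fin.val_succ, Matrix.zero_apply]
    · -- inl inl
      rw [coe_succAbove]
      simp only [Fin.coe_cast, Fin.coe_castAdd]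
      exact congrArg hh (by split_ifs <;> push_cast <;> omega)
    · -- inl inr
      rw [coe_succAbove]
      simp only [Fin.coe_cast, Fin.coe_castAdd, Fin.coe_natAdd]
      exact congrArg hh (by split_ifs <;> push_cast <;> omega)
    · -- inr inl : zero
      rw [coe_succAbove]
      simp only [Fin.coe_cast, Fin.coe_castAdd, Fin.coe_natAdd]
      split_ifs with hcj
      · exact hh_neg (by push_cast; omega)
      · exfalso; omega
    · -- inr inr
      rw [coe_succAbove]
      simp only [Fin.coe_cast, Fin.coe_castAdd, Fin.coe_natAdd]
      exact congrArg hh (by split_ifs <;> push_cast <;> omega)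
  rw [key, Matrix.det_fromBlocks_zero₂₁]
  have hA : (Matrix.of fun a c : Fin (j : ℕ) => hh ((c : ℤ) - (a : ℤ))).det = 1 := by
    rw [Matrix.det_of_upperTriangular ?_]
    · simp [hh_zero]
    · intro a c hac
      exact hh_neg (by simp at hac ⊢; omega)
  rw [hA, one_mul, ee_eq]

lemma eeRec (d : ℕ) :
    ee (d+1) = ∑ t ∈ range (d+1), (-1 : SymF)^t * hh ((t : ℤ)+1) * ee (d - t) := by
  rw [ee_eq, Matrix.det_succ_row_zero]
  have step : ∀ jj : Fin (d+1), (-1:SymF) ^ (jj:ℕ) *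
      (Matrix.of fun i c : Fin (d+1) => hh (1 + (c : ℤ) - (i : ℤ))) 0 jj *
      ((Matrix.of fun i c : Fin (d+1) => hh (1 + (c : ℤ) - (i : ℤ))).submatrix
        Fin.succ jj.succAbove).det
      = (-1 : SymF)^(jj:ℕ) * hh (((jj:ℕ) : ℤ)+1) * ee (d - (jj:ℕ)) := by
    intro jj
    rw [eeMinor]
    simp only [Matrix.of_apply, Fin.val_zero]
    congr 2
    push_cast
    ring
  rw [Finset.sum_congr rfl (fun jj _ => step jj)]
  exact Fin.sum_univ_eq_sum_range (fun t => (-1 : SymF)^t * hh ((t : ℤ)+1) * ee (d - t)) (d+1)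

lemma wronski (d : ℕ) (hd : 1 ≤ d) :
    ∑ s ∈ range (d+1), (-1 : SymF)^s * hh (s : ℤ) * E ((d : ℤ) - s) = 0 := by
  obtain ⟨d', rfl⟩ := Nat.exists_eq_add_of_le hd
  rw [Finset.sum_range_succ']
  have h0 : (-1 : SymF)^(0:ℕ) * hh ((0:ℕ) : ℤ) * E (((1 + d' : ℕ) : ℤ) - ((0:ℕ) : ℤ))
      = ee (d' + 1) := by
    simp only [pow_zero, one_mul, Nat.cast_zero, sub_zero]
    rw [hh_zero, one_mul, E_coe]
    congr 1
    omega
  rw [h0]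
  have hstep : ∀ t ∈ range (1 + d'), (-1 : SymF)^(t+1) * hh (((t+1:ℕ)) : ℤ) *
      E (((1 + d' : ℕ) : ℤ) - ((t+1 : ℕ) : ℤ))
      = -((-1 : SymF)^t * hh ((t : ℤ)+1) * ee (d' - t)) := by
    intro t ht
    rw [Finset.mem_range] at ht
    have : (((1 + d' : ℕ) : ℤ) - ((t+1 : ℕ) : ℤ)) = ((d' - t : ℕ) : ℤ) := by push_cast; omega
    rw [this, E_coe, pow_succ]
    push_cast
    ring
  rw [Finset.sum_congr rfl hstep, Finset.sum_neg_distrib]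
  rw [show (1 + d') = d' + 1 by omega, eeRec d']
  ring

-- HE = 1
lemma HmEm (N : ℕ) : Hm N * Em N = 1 := by
  apply Matrix.ext
  intro i k
  rw [Matrix.mul_apply]
  rcases lt_trichotomy (i : ℕ) (k : ℕ) with hik | hik | hik
  · -- i < k : Wronski
    rw [Matrix.one_apply_ne (by intro h; rw [h] at hik; omega)]
    have conv : ∑ j : Fin N, Hm N i j * Em N j k =
        ∑ n ∈ range N, hh ((n : ℤ) - (i : ℤ)) * ((-1 : SymF) ^ (n + (k : ℕ)) * E ((k : ℤ) - (n : ℤ))) := by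
      rw [← Fin.sum_univ_eq_sum_range (fun n => hh ((n : ℤ) - (i : ℤ)) *
        ((-1 : SymF) ^ (n + (k : ℕ)) * E ((k : ℤ) - (n : ℤ)))) N]
      rfl
    rw [conv]
    have hsub : Finset.Ico (i : ℕ) ((k : ℕ)+1) ⊆ range N := by
      intro t ht
      simp only [Finset.mem_Ico, Finset.mem_range] at ht ⊢
      have := k.isLt; omega
    rw [← Finset.sum_subset hsub (fun t ht hnot => ?zero)]
    case zero =>
      simp only [Finset.mem_Ico, not_and, not_lt] at hnot
      rcases lt_or_ge t (i : ℕ) with h | h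
      · rw [hh_neg (by push_cast; omega), zero_mul]
      · rw [E_neg (by have := hnot h; push_cast; omega), mul_zero, mul_zero]
    rw [Finset.sum_Ico_eq_sum_range]
    have harg : ∀ s, hh (((i : ℕ) + s : ℕ) - (i : ℤ)) *
        ((-1 : SymF) ^ ((i : ℕ) + s + (k : ℕ)) * E ((k : ℤ) - ((i : ℕ) + s : ℕ))) =
        (-1 : SymF) ^ ((i : ℕ) + (k : ℕ)) *
          ((-1 : SymF) ^ s * hh (s : ℤ) * E ((((k : ℕ) - (i : ℕ) : ℕ)) - (s : ℤ))) := by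
      intro s
      have h1 : (((i : ℕ) + s : ℕ) : ℤ) - (i : ℤ) = (s : ℤ) := by push_cast; ring
      have h2 : ((k : ℤ) - (((i : ℕ) + s : ℕ) : ℤ)) = ((((k : ℕ) - (i : ℕ) : ℕ)) : ℤ) - (s : ℤ) := by
        push_cast [Nat.cast_sub (le_of_lt hik)]; ring
      rw [h1, h2, pow_add, pow_add]
      ring
    rw [Finset.sum_congr rfl (fun s _ => harg s), ← Finset.mul_sum]
    rw [show (k : ℕ) + 1 - (i : ℕ) = ((k : ℕ) - (i : ℕ)) + 1 by omega]
    rw [wronski ((k : ℕ) - (i : ℕ)) (by omega), mul_zero]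
  · -- i = k
    have hik' : i = k := Fin.ext hik
    subst hik'
    rw [Matrix.one_apply_eq]
    rw [Finset.sum_eq_single i ?h1 ?h2]
    · simp only [Hm, Em, Matrix.of_apply, sub_self, hh_zero, one_mul, E_zero, mul_one]
      exact Even.neg_one_pow ⟨(i : ℕ), by ring⟩
    case h1 =>
      intro j _ hji
      simp only [Hm, Em, Matrix.of_apply]
      rcases lt_or_ge (j : ℕ) (i : ℕ) with h | h
      · rw [hh_neg (by push_cast; omega), zero_mul]
      · have : (i : ℕ) < (j : ℕ) := by
          rcases Nat.lt_or_ge (i : ℕ) (j : ℕ) with h' | h'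
          · exact h'
          · exact absurd (Fin.ext (le_antisymm h' h)) hji
        rw [E_neg (by push_cast; omega), mul_zero, mul_zero]
    case h2 => intro h; exact absurd (Finset.mem_univ i) h
  · -- k < i : zero
    rw [Matrix.one_apply_ne (by intro h; rw [h] at hik; omega)]
    apply Finset.sum_eq_zero
    intro j _
    simp only [Hm, Em, Matrix.of_apply]
    rcases lt_or_ge (j : ℕ) (i : ℕ) with h | h
    · rw [hh_neg (by push_cast; omega), zero_mul]
    · rw [E_neg (by push_cast; omega), mul_zero, mul_zero]

def skip (a t : ℕ) : ℕ := if t < a then t else t + 1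

def dmap (a b : ℕ) {n : ℕ} : Fin n → Fin (n+2) :=
  fun t => ⟨skip b (skip a (t : ℕ)), by unfold skip; split_ifs <;> omega⟩

-- strike a unit column
lemma strike {n : ℕ} (M : Matrix (Fin (n+1)) (Fin (n+1)) SymF) (r c : Fin (n+1))
    (h : ∀ i, M i c = if i = r then 1 else 0) :
    M.det = (-1 : SymF) ^ ((r : ℕ) + (c : ℕ)) * (M.submatrix r.succAbove c.succAbove).det := by
  rw [Matrix.det_succ_column M c]
  rw [Finset.sum_eq_single r ?h1 ?h2]
  · rw [h r, if_pos rfl, mul_one]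
  case h1 =>
    intro i _ hir
    rw [h i, if_neg hir, mul_zero, zero_mul]
  case h2 => intro h'; exact absurd (Finset.mem_univ r) h'

lemma negsq (e : ℕ) : (-1 : SymF)^e * (-1 : SymF)^e = 1 := by
  rw [← pow_add]; exact Even.neg_one_pow ⟨e, by ring⟩

set_option maxHeartbeats 1000000 in
lemma jacobi {N : ℕ} (A B : Matrix (Fin (N+2)) (Fin (N+2)) SymF) (hAB : A * B = 1)
    (hdetA : A.det = 1) (p0 p1 q0 q1 : ℕ)
    (hp01 : p0 < p1) (hp1 : p1 < N+2) (hq01 : q0 < q1) (hq1 : q1 < N+2) :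
    (A.submatrix (dmap q0 q1) (dmap p0 p1)).det
      = (-1 : SymF)^(p0+p1+q0+q1) *
        (B ⟨p0, by omega⟩ ⟨q0, by omega⟩ * B ⟨p1, hp1⟩ ⟨q1, hq1⟩ -
         B ⟨p0, by omega⟩ ⟨q1, hq1⟩ * B ⟨p1, hp1⟩ ⟨q0, by omega⟩) := by
  set P0 : Fin (N+2) := ⟨p0, by omega⟩ with hP0def
  set P1 : Fin (N+2) := ⟨p1, hp1⟩ with hP1def
  set Q0 : Fin (N+2) := ⟨q0, by omega⟩ with hQ0def
  set Q1 : Fin (N+2) := ⟨q1, hq1⟩ with hQ1def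
  have hP01 : P0 ≠ P1 := by
    intro h
    have := congrArg Fin.val h
    simp only [hP0def, hP1def] at this
    omega
  have hQ01 : Q0 ≠ Q1 := by
    intro h
    have := congrArg Fin.val h
    simp only [hQ0def, hQ1def] at this
    omega
  set C : Matrix (Fin (N+2)) (Fin (N+2)) SymF :=
    Matrix.of fun r c => if c = P0 then B r Q0 else if c = P1 then B r Q1
      else (1 : Matrix (Fin (N+2)) (Fin (N+2)) SymF) r c with hCdef
  -- det C
  have hC : C.det = B P0 Q0 * B P1 Q1 - B P0 Q1 * B P1 Q0 := by
    set U : Matrix (Fin (N+2)) (Fin 2) SymF :=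
      Matrix.of fun r a => B r (if a = 0 then Q0 else Q1) -
        (if r = (if a = 0 then P0 else P1) then 1 else 0) with hUdef
    set V : Matrix (Fin 2) (Fin (N+2)) SymF :=
      Matrix.of fun a c => if c = (if a = 0 then P0 else P1) then 1 else 0 with hVdef
    have hCUV : C = 1 + U * V := by
      apply Matrix.ext
      intro r c
      rw [Matrix.add_apply, Matrix.mul_apply, Fin.sum_univ_two]
      simp only [hCdef, hUdef, hVdef, Matrix.of_apply]
      simp only [Fin.isValue, one_ne_zero, ↓reduceIte, if_true]
      by_cases hc0 : c = P0
      · subst hc0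
        simp only [↓reduceIte, if_neg hP01, if_neg (Ne.symm hP01), Matrix.one_apply]
        split_ifs <;> ring
      · by_cases hc1 : c = P1
        · subst hc1
          simp only [↓reduceIte, if_neg hP01, if_neg (Ne.symm hP01), if_neg hc0,
            Matrix.one_apply]
          split_ifs <;> ring
        · simp only [if_neg hc0, if_neg hc1, Matrix.one_apply]
          split_ifs <;> ring
    have hVU : ∀ (a : Fin 2) (b : Fin 2), (V * U) a b = U (if a = 0 then P0 else P1) b := by
      intro a b
      rw [Matrix.mul_apply]
      rw [Finset.sum_eq_single (if a = 0 then P0 else P1)]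
      · rw [hVdef]; simp only [Matrix.of_apply]; simp only [Fin.isValue, one_ne_zero, ↓reduceIte, if_true, one_mul]
      · intro c _ hc
        rw [hVdef]; simp only [Matrix.of_apply]; rw [if_neg hc, zero_mul]
      · intro h; exact absurd (Finset.mem_univ _) h
    rw [hCUV, Matrix.det_one_add_mul_comm, Matrix.det_fin_two]
    simp only [Matrix.add_apply, hVU]
    simp only [hUdef, Matrix.of_apply]
    simp only [Fin.isValue, one_ne_zero, ↓reduceIte, if_true, Matrix.one_apply_eq,
      Matrix.one_apply_ne (show (0 : Fin 2) ≠ 1 by decide),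
      Matrix.one_apply_ne (show (1 : Fin 2) ≠ 0 by decide),
      if_neg hP01, if_neg (Ne.symm hP01)]
    ring
  -- A * C
  have hAC : A * C = Matrix.of fun r c =>
      if c = P0 then (if r = Q0 then (1 : SymF) else 0)
      else if c = P1 then (if r = Q1 then (1 : SymF) else 0) else A r c := by
    apply Matrix.ext
    intro r c
    rw [Matrix.mul_apply]
    simp only [hCdef, Matrix.of_apply]
    by_cases hc0 : c = P0
    · subst hc0
      simp only [eq_self_iff_true, if_true]
      rw [show ∑ k, A r k * B k Q0 = (A * B) r Q0 from (Matrix.mul_apply).symm, hAB,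
        Matrix.one_apply]
    · by_cases hc1 : c = P1
      · subst hc1
        simp only [if_neg hP01, eq_self_iff_true, if_true, if_neg hc0]
        rw [show ∑ k, A r k * B k Q1 = (A * B) r Q1 from (Matrix.mul_apply).symm, hAB,
          Matrix.one_apply]
      · simp only [if_neg hc0, if_neg hc1]
        rw [show (∑ k, A r k * (1 : Matrix (Fin (N+2)) (Fin (N+2)) SymF) k c)
            = (A * (1 : Matrix (Fin (N+2)) (Fin (N+2)) SymF)) r c from (Matrix.mul_apply).symm,
          Matrix.mul_one]
  have hdetAC : (A * C).det = C.det := by rw [Matrix.det_mul, hdetA, one_mul]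
  -- first strike at column P1, row Q1
  have hstrike1 : (A * C).det = (-1 : SymF)^(q1 + p1) *
      ((A * C).submatrix Q1.succAbove P1.succAbove).det := by
    exact strike (A * C) Q1 P1 (fun i => by
      rw [hAC]
      simp only [Matrix.of_apply]
      simp only [if_neg (Ne.symm hP01), if_true])
  set P0' : Fin (N+1) := ⟨p0, by omega⟩ with hP0'def
  set Q0' : Fin (N+1) := ⟨q0, by omega⟩ with hQ0'def
  have hP1P0 : P1.succAbove P0' = P0 := by
    apply Fin.ext
    rw [coe_succAbove]
    simp only [hP0'def, hP1def, hP0def]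
    rw [if_pos hp01]
  have hQ1Q0 : Q1.succAbove Q0' = Q0 := by
    apply Fin.ext
    rw [coe_succAbove]
    simp only [hQ0'def, hQ1def, hQ0def]
    rw [if_pos hq01]
  -- second strike
  have hstrike2 : ((A * C).submatrix Q1.succAbove P1.succAbove).det =
      (-1 : SymF)^(q0 + p0) *
      (((A * C).submatrix Q1.succAbove P1.succAbove).submatrix Q0'.succAbove P0'.succAbove).det := by
    exact strike _ Q0' P0' (fun i => by
      rw [Matrix.submatrix_apply, hP1P0, hAC]
      simp only [Matrix.of_apply]
      simp only [if_true]
      by_cases hi : i = Q0'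
      · subst hi
        rw [hQ1Q0, if_pos rfl, if_pos rfl]
      · rw [if_neg ?_, if_neg hi]
        intro h
        exact hi (Fin.succAbove_right_injective (p := Q1) (h.trans hQ1Q0.symm)))
  -- identify the doubly struck matrix
  have hident : ((A * C).submatrix Q1.succAbove P1.succAbove).submatrix Q0'.succAbove P0'.succAbove
      = A.submatrix (dmap q0 q1) (dmap p0 p1) := by
    apply Matrix.ext
    intro t s
    simp only [Matrix.submatrix_apply]
    have hcol_ne1 : P1.succAbove (P0'.succAbove s) ≠ P1 := Fin.succAbove_ne P1 _
    have hcol_ne0 : P1.succAbove (P0'.succAbove s) ≠ P0 := by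
      intro h
      rw [← hP1P0] at h
      exact Fin.succAbove_ne P0' s (Fin.succAbove_right_injective h)
    have hrow : Q1.succAbove (Q0'.succAbove t) = dmap q0 q1 t := by
      apply Fin.ext
      rw [coe_succAbove, coe_succAbove]
      show _ = skip q1 (skip q0 (t : ℕ))
      simp only [hQ0'def, hQ1def, skip]
      split_ifs <;> omega
    have hcol : P1.succAbove (P0'.succAbove s) = dmap p0 p1 s := by
      apply Fin.ext
      rw [coe_succAbove, coe_succAbove]
      show _ = skip p1 (skip p0 (s : ℕ))
      simp only [hP0'def, hP1def, skip]
      split_ifs <;> omega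
    rw [hAC]
    simp only [Matrix.of_apply]
    rw [if_neg hcol_ne0, if_neg hcol_ne1, hrow, hcol]
  -- combine
  have hpow : (-1 : SymF)^(p0+p1+q0+q1) = (-1 : SymF)^(q1+p1) * (-1 : SymF)^(q0+p0) := by
    rw [← pow_add]
    congr 1
    omega
  have h1 : C.det = (-1 : SymF)^(q1+p1) * ((-1 : SymF)^(q0+p0) *
      (A.submatrix (dmap q0 q1) (dmap p0 p1)).det) := by
    rw [← hident, ← hstrike2, ← hstrike1, hdetAC]
  calc (A.submatrix (dmap q0 q1) (dmap p0 p1)).det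
      = ((-1 : SymF)^(q1+p1) * (-1 : SymF)^(q1+p1)) *
        (((-1 : SymF)^(q0+p0) * (-1 : SymF)^(q0+p0)) *
          (A.submatrix (dmap q0 q1) (dmap p0 p1)).det) := by rw [negsq, negsq]; ring
    _ = (-1 : SymF)^(q1+p1) * ((-1 : SymF)^(q0+p0) *
        ((-1 : SymF)^(q1+p1) * ((-1 : SymF)^(q0+p0) *
          (A.submatrix (dmap q0 q1) (dmap p0 p1)).det))) := by ring
    _ = (-1 : SymF)^(q1+p1) * ((-1 : SymF)^(q0+p0) * C.det) := by rw [← h1]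
    _ = (-1 : SymF)^(p0+p1+q0+q1) * C.det := by rw [hpow]; ring
    _ = _ := by rw [hC]

def Pe (x k r : ℕ) : SymF :=
  E (x : ℤ) * E ((x : ℤ) + k - r) - E ((x : ℤ) - r - 1) * E ((x : ℤ) + k + 1)

lemma Pe_zero (x k r : ℕ) (h : x + k + 1 ≤ r) : Pe x k r = 0 := by
  unfold Pe
  rw [E_neg (n := (x : ℤ) + k - r) (by omega), E_neg (n := (x : ℤ) - r - 1) (by omega)]
  ring

set_option maxHeartbeats 1000000 in
lemma lemmaB (x k m l : ℕ) (hl : l = x + k + 1) (lam : Fin l → ℕ)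
    (hlam : ∀ t : Fin l, lam t = if (t : ℕ) = 0 then m else if (t : ℕ) ≤ x then 2 else 1) :
    schur l lam = ∑ r ∈ range l, (-1 : SymF)^r * hh ((m : ℤ) + r) * Pe x k r := by
  subst hl
  unfold schur
  rw [Matrix.det_succ_row_zero]
  have hm0 : (Matrix.of fun i j : Fin (x+k+1) =>
      hh ((lam i : ℤ) + (j : ℤ) - (i : ℤ))) 0
      = fun j : Fin (x+k+1) => hh ((m : ℤ) + ((j : ℕ) : ℤ)) := by
    funext j
    simp only [Matrix.of_apply]
    rw [hlam 0]
    norm_num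
  have hmin : ∀ j : Fin (x+k+1),
      ((Matrix.of fun i j : Fin (x+k+1) =>
        hh ((lam i : ℤ) + (j : ℤ) - (i : ℤ))).submatrix Fin.succ j.succAbove).det
      = Pe x k (j : ℕ) := by
    intro j
    have hident : (Matrix.of fun i j : Fin (x+k+1) =>
        hh ((lam i : ℤ) + (j : ℤ) - (i : ℤ))).submatrix Fin.succ j.succAbove
        = (Hm (x+k+2)).submatrix (dmap x (x+k+1)) (dmap 0 ((j : ℕ)+1)) := by
      apply Matrix.ext
      intro i b
      simp only [Matrix.submatrix_apply, Matrix.of_apply, Hm]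
      rw [hlam, coe_succAbove]
      apply congrArg hh
      show _ = ((skip ((j:ℕ)+1) (skip 0 (b:ℕ)) : ℕ) : ℤ) - ((skip (x+k+1) (skip x (i:ℕ)) : ℕ) : ℤ)
      simp only [skip, Fin.val_succ]
      have hiL : (i : ℕ) < x + k := i.isLt
      have hjL : (j : ℕ) < x + k + 1 := j.isLt
      have hbL : (b : ℕ) < x + k := b.isLt
      rw [if_neg (by omega : ¬((i:ℕ) + 1 = 0))]
      split_ifs <;> push_cast <;> omega
    rw [hident]
    rw [jacobi (Hm (x+k+2)) (Em (x+k+2)) (HmEm (x+k+2)) (detHm (x+k+2)) 0 ((j:ℕ)+1) x (x+k+1)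
      (by omega) (by have := j.isLt; omega) (by omega) (by omega)]
    simp only [Em, Matrix.of_apply]
    rw [show ((x : ℕ) : ℤ) - (((0 : ℕ) : ℤ)) = (x : ℤ) by push_cast; ring]
    rw [show ((x+k+1 : ℕ) : ℤ) - (((j:ℕ)+1 : ℕ) : ℤ) = (x : ℤ) + k - (j:ℕ) by push_cast; ring]
    rw [show ((x+k+1 : ℕ) : ℤ) - (((0:ℕ)) : ℤ) = (x : ℤ) + k + 1 by push_cast; ring]
    rw [show ((x : ℕ) : ℤ) - (((j:ℕ)+1 : ℕ) : ℤ) = (x : ℤ) - (j:ℕ) - 1 by push_cast; ring]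
    have hBC : (-1 : SymF)^(0+x) * (-1 : SymF)^(((j:ℕ)+1)+(x+k+1))
        = (-1 : SymF)^(0+((j:ℕ)+1)+x+(x+k+1)) := by
      rw [← pow_add]; congr 1; omega
    have hDF : (-1 : SymF)^(0+(x+k+1)) * (-1 : SymF)^(((j:ℕ)+1)+x)
        = (-1 : SymF)^(0+((j:ℕ)+1)+x+(x+k+1)) := by
      rw [← pow_add]; congr 1; omega
    calc (-1 : SymF)^(0+((j:ℕ)+1)+x+(x+k+1)) *
          ((-1 : SymF)^(0+x) * E (x : ℤ) *
            ((-1 : SymF)^(((j:ℕ)+1)+(x+k+1)) * E ((x : ℤ) + k - (j:ℕ))) -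
           (-1 : SymF)^(0+(x+k+1)) * E ((x : ℤ) + k + 1) *
            ((-1 : SymF)^(((j:ℕ)+1)+x) * E ((x : ℤ) - (j:ℕ) - 1)))
        = (-1 : SymF)^(0+((j:ℕ)+1)+x+(x+k+1)) *
          (((-1 : SymF)^(0+x) * (-1 : SymF)^(((j:ℕ)+1)+(x+k+1))) *
              (E (x : ℤ) * E ((x : ℤ) + k - (j:ℕ))) -
           ((-1 : SymF)^(0+(x+k+1)) * (-1 : SymF)^(((j:ℕ)+1)+x)) *
              (E ((x : ℤ) - (j:ℕ) - 1) * E ((x : ℤ) + k + 1))) := by ring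
      _ = (-1 : SymF)^(0+((j:ℕ)+1)+x+(x+k+1)) *
          ((-1 : SymF)^(0+((j:ℕ)+1)+x+(x+k+1)) *
              (E (x : ℤ) * E ((x : ℤ) + k - (j:ℕ))) -
           (-1 : SymF)^(0+((j:ℕ)+1)+x+(x+k+1)) *
              (E ((x : ℤ) - (j:ℕ) - 1) * E ((x : ℤ) + k + 1))) := by rw [hBC, hDF]
      _ = ((-1 : SymF)^(0+((j:ℕ)+1)+x+(x+k+1)) * (-1 : SymF)^(0+((j:ℕ)+1)+x+(x+k+1))) *
          (E (x : ℤ) * E ((x : ℤ) + k - (j:ℕ)) -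
           E ((x : ℤ) - (j:ℕ) - 1) * E ((x : ℤ) + k + 1)) := by ring
      _ = Pe x k (j : ℕ) := by rw [negsq, one_mul, Pe]
  calc ∑ j : Fin (x+k+1), (-1 : SymF)^(j:ℕ) *
        (Matrix.of fun i j : Fin (x+k+1) => hh ((lam i : ℤ) + (j : ℤ) - (i : ℤ))) 0 j *
        ((Matrix.of fun i j : Fin (x+k+1) =>
          hh ((lam i : ℤ) + (j : ℤ) - (i : ℤ))).submatrix Fin.succ j.succAbove).det
      = ∑ j : Fin (x+k+1), (-1 : SymF)^(j:ℕ) * hh ((m : ℤ) + (j:ℕ)) * Pe x k (j:ℕ) := by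
        refine Finset.sum_congr rfl fun j _ => ?_
        rw [hmin j, hm0]
    _ = ∑ r ∈ range (x+k+1), (-1 : SymF)^r * hh ((m : ℤ) + r) * Pe x k r :=
        Fin.sum_univ_eq_sum_range (fun r => (-1 : SymF)^r * hh ((m : ℤ) + r) * Pe x k r) (x+k+1)

section Final

variable (i j : ℕ)

/-- The inner sums appearing on the right side. -/
def Qf (i j r : ℕ) : SymF := ∑ x ∈ range (min i (j+1)), Pe x (i+j-1-2*x) r
def Rf (i j r : ℕ) : SymF := ∑ x ∈ range (min i j + 1), Pe x (i+j-2*x) r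

lemma key0 : Rf i j 0 = E (i:ℤ) * E (j:ℤ) := by
  set f : ℕ → SymF := fun s => E ((s:ℤ) - 1) * E ((i:ℤ) + j + 1 - s) with hf
  have hstep : ∀ x ∈ range (min i j + 1), Pe x (i+j-2*x) 0 = f (x+1) - f x := by
    intro x hx
    rw [Finset.mem_range] at hx
    have h2x : 2*x ≤ i + j := by omega
    unfold Pe
    rw [hf]
    beta_reduce
    have c1 : (x:ℤ) + ((i+j-2*x : ℕ) : ℤ) - (0:ℕ) = (i:ℤ) + j + 1 - ((x+1 : ℕ) : ℤ) := by
      push_cast [Nat.cast_sub h2x]; ring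
    have c2 : ((x+1 : ℕ) : ℤ) - 1 = (x:ℤ) := by push_cast; ring
    have c3 : (x:ℤ) - (0:ℕ) - 1 = (x:ℤ) - 1 := by push_cast; ring
    have c4 : (x:ℤ) + ((i+j-2*x : ℕ) : ℤ) + 1 = (i:ℤ) + j + 1 - (x:ℤ) := by
      push_cast [Nat.cast_sub h2x]; ring
    rw [c1, c3, c4, c2]
  rw [Rf, Finset.sum_congr rfl hstep, Finset.sum_range_sub f]
  have hf0 : f 0 = 0 := by
    rw [hf]
    simp only [Nat.cast_zero, zero_sub]
    rw [E_neg (by omega), zero_mul]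
  rw [hf0, sub_zero, hf]
  rcases le_total i j with hij | hij
  · rw [min_eq_left hij]
    have c1 : ((i+1 : ℕ) : ℤ) - 1 = (i:ℤ) := by push_cast; ring
    have c2 : (i:ℤ) + j + 1 - ((i+1 : ℕ) : ℤ) = (j:ℤ) := by push_cast; ring
    beta_reduce
    rw [c1, c2]
  · rw [min_eq_right hij]
    have c1 : ((j+1 : ℕ) : ℤ) - 1 = (j:ℤ) := by push_cast; ring
    have c2 : (i:ℤ) + j + 1 - ((j+1 : ℕ) : ℤ) = (i:ℤ) := by push_cast; ring
    beta_reduce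
    rw [c1, c2, mul_comm]

lemma keyS (t : ℕ) : Rf i j (t+1) - Qf i j t = E (i:ℤ) * E ((j:ℤ) - t - 1) := by
  set a : ℕ → SymF := fun x => E (x:ℤ) * E ((i:ℤ) + j - x - t - 1) with ha
  set b : ℕ → SymF := fun x => E ((x:ℤ) - t - 2) * E ((i:ℤ) + j + 1 - x) with hb
  have hR : ∀ x ∈ range (min i j + 1), Pe x (i+j-2*x) (t+1) = a x - b x := by
    intro x hx
    rw [Finset.mem_range] at hx
    have h2x : 2*x ≤ i + j := by omega
    unfold Pe
    rw [ha, hb]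
    have c1 : (x:ℤ) + ((i+j-2*x : ℕ) : ℤ) - ((t+1 : ℕ) : ℤ) = (i:ℤ) + j - x - t - 1 := by
      push_cast [Nat.cast_sub h2x]; ring
    have c2 : (x:ℤ) - ((t+1 : ℕ) : ℤ) - 1 = (x:ℤ) - t - 2 := by push_cast; ring
    have c3 : (x:ℤ) + ((i+j-2*x : ℕ) : ℤ) + 1 = (i:ℤ) + j + 1 - (x:ℤ) := by
      push_cast [Nat.cast_sub h2x]; ring
    rw [c1, c2, c3]
  have hQ : ∀ x ∈ range (min i (j+1)), Pe x (i+j-1-2*x) t = a x - b (x+1) := by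
    intro x hx
    rw [Finset.mem_range] at hx
    have h2x : 2*x + 1 ≤ i + j := by omega
    unfold Pe
    rw [ha, hb]
    have c1 : (x:ℤ) + ((i+j-1-2*x : ℕ) : ℤ) - (t : ℤ) = (i:ℤ) + j - x - t - 1 := by
      push_cast [Nat.cast_sub (by omega : 2*x ≤ i + j - 1), Nat.cast_sub (by omega : 1 ≤ i + j)]
      ring
    have c2 : (x:ℤ) - (t:ℤ) - 1 = ((x+1 : ℕ) : ℤ) - t - 2 := by push_cast; ring
    have c3 : (x:ℤ) + ((i+j-1-2*x : ℕ) : ℤ) + 1 = (i:ℤ) + j + 1 - ((x+1 : ℕ) : ℤ) := by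
      push_cast [Nat.cast_sub (by omega : 2*x ≤ i + j - 1), Nat.cast_sub (by omega : 1 ≤ i + j)]
      ring
    rw [c1, c2, c3]
  have hb0 : b 0 = 0 := by
    rw [hb]
    simp only [Nat.cast_zero]
    rw [E_neg (by omega), zero_mul]
  rw [Rf, Qf, Finset.sum_congr rfl hR, Finset.sum_congr rfl hQ]
  rcases le_or_gt i j with hij | hij
  · rw [min_eq_left hij, min_eq_left (by omega : i ≤ j + 1)]
    rw [Finset.sum_sub_distrib, Finset.sum_sub_distrib, Finset.sum_range_succ (fun x => a x) i,
      Finset.sum_range_succ' (fun x => b x) i]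
    have hai : a i = E (i:ℤ) * E ((j:ℤ) - t - 1) := by
      rw [ha]
      beta_reduce
      have : (i:ℤ) + j - i - t - 1 = (j:ℤ) - t - 1 := by ring
      rw [this]
    rw [hai, hb0]
    abel
  · rw [min_eq_right (by omega : j ≤ i), min_eq_right (by omega : j + 1 ≤ i)]
    have : ∑ x ∈ range (j+1), (a x - b x) - ∑ x ∈ range (j+1), (a x - b (x+1))
        = ∑ x ∈ range (j+1), (b (x+1) - b x) := by
      rw [← Finset.sum_sub_distrib]
      refine Finset.sum_congr rfl fun x _ => ?_
      ring
    rw [this, Finset.sum_range_sub b]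
    rw [hb0, sub_zero, hb]
    have c1 : ((j+1 : ℕ) : ℤ) - t - 2 = (j:ℤ) - t - 1 := by push_cast; ring
    have c2 : (i:ℤ) + j + 1 - ((j+1 : ℕ) : ℤ) = (i:ℤ) := by push_cast; ring
    beta_reduce
    rw [c1, c2, mul_comm]

end Final

/-- For `m ≥ 2` and `i, j ≥ 0`,
`e_i · s_{(m,1^j)} = ∑_{x=0}^{min(i-1,j)} s_{(m+1,2^x,1^{i+j-1-2x})}
  + ∑_{x=0}^{min(i,j)} s_{(m,2^x,1^{i+j-2x})}`
(the first sum being empty when `i = 0`). -/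
theorem stmt6 (m i j : ℕ) (hm : 2 ≤ m) :
    ee i * schur (j+1) (fun k => if (k : ℕ) = 0 then m else 1)
    = (∑ x ∈ Finset.range (min i (j+1)),
        schur (i + j - x)
          (fun k => if (k : ℕ) = 0 then m + 1 else if (k : ℕ) ≤ x then 2 else 1))
      + ∑ x ∈ Finset.range (min i j + 1),
        schur (i + j + 1 - x)
          (fun k => if (k : ℕ) = 0 then m else if (k : ℕ) ≤ x then 2 else 1) := by
  -- LHS hook expansion
  have hook : schur (j+1) (fun k => if (k : ℕ) = 0 then m else 1)
      = ∑ r ∈ range (j+1), (-1:SymF)^r * hh ((m:ℤ) + r) * Pe 0 j r := by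
    apply lemmaB 0 j m (j+1) (by omega)
    intro t
    by_cases h : (t:ℕ) = 0
    · rw [if_pos h, if_pos h]
    · rw [if_neg h, if_neg h, if_neg (by omega)]
  have hPe0 : ∀ r : ℕ, Pe 0 j r = E ((j:ℤ) - r) := by
    intro r
    unfold Pe
    simp only [Nat.cast_zero, zero_add, zero_sub, E_zero, one_mul]
    rw [E_neg (n := -(r:ℤ) - 1) (by omega)]
    ring
  have hL : ee i * schur (j+1) (fun k => if (k : ℕ) = 0 then m else 1)
      = ∑ r ∈ range (i+j+2), (-1:SymF)^r * hh ((m:ℤ) + r) * (E (i:ℤ) * E ((j:ℤ) - r)) := by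
    rw [hook, Finset.mul_sum]
    calc ∑ r ∈ range (j+1), ee i * ((-1:SymF)^r * hh ((m:ℤ) + r) * Pe 0 j r)
        = ∑ r ∈ range (j+1), (-1:SymF)^r * hh ((m:ℤ) + r) * (E (i:ℤ) * E ((j:ℤ) - r)) :=
          Finset.sum_congr rfl fun r _ => by rw [hPe0 r, ← E_coe i]; ring
      _ = ∑ r ∈ range (i+j+2), (-1:SymF)^r * hh ((m:ℤ) + r) * (E (i:ℤ) * E ((j:ℤ) - r)) := by
          apply Finset.sum_subset (Finset.range_subset_range.mpr (by omega))
          intro r _ hr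
          rw [Finset.mem_range, not_lt] at hr
          rw [E_neg (n := (j:ℤ) - r) (by omega), mul_zero, mul_zero]
  -- RHS first sum, term by term
  have hR1 : ∀ x ∈ range (min i (j+1)),
      schur (i+j-x) (fun k : Fin (i+j-x) => if (k:ℕ) = 0 then m+1 else if (k:ℕ) ≤ x then 2 else 1)
      = ∑ r ∈ range (i+j+2), (-1:SymF)^r * hh ((m:ℤ) + 1 + r) * Pe x (i+j-1-2*x) r := by
    intro x hx
    rw [Finset.mem_range] at hx
    calc schur (i+j-x) (fun k : Fin (i+j-x) =>
            if (k:ℕ) = 0 then m+1 else if (k:ℕ) ≤ x then 2 else 1)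
        = ∑ r ∈ range (i+j-x), (-1:SymF)^r * hh (((m+1:ℕ):ℤ) + r) * Pe x (i+j-1-2*x) r :=
          lemmaB x (i+j-1-2*x) (m+1) (i+j-x) (by omega) _ (fun t => rfl)
      _ = ∑ r ∈ range (i+j-x), (-1:SymF)^r * hh ((m:ℤ) + 1 + r) * Pe x (i+j-1-2*x) r :=
          Finset.sum_congr rfl fun r _ => by
            rw [show ((m+1:ℕ):ℤ) + r = (m:ℤ) + 1 + r by push_cast; ring]
      _ = ∑ r ∈ range (i+j+2), (-1:SymF)^r * hh ((m:ℤ) + 1 + r) * Pe x (i+j-1-2*x) r := by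
          apply Finset.sum_subset (Finset.range_subset_range.mpr (by omega))
          intro r _ hr
          rw [Finset.mem_range, not_lt] at hr
          rw [Pe_zero x (i+j-1-2*x) r (by omega), mul_zero]
  have hR2 : ∀ x ∈ range (min i j + 1),
      schur (i+j+1-x) (fun k : Fin (i+j+1-x) => if (k:ℕ) = 0 then m else if (k:ℕ) ≤ x then 2 else 1)
      = ∑ r ∈ range (i+j+2), (-1:SymF)^r * hh ((m:ℤ) + r) * Pe x (i+j-2*x) r := by
    intro x hx
    rw [Finset.mem_range] at hx
    calc schur (i+j+1-x) (fun k : Fin (i+j+1-x) =>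
            if (k:ℕ) = 0 then m else if (k:ℕ) ≤ x then 2 else 1)
        = ∑ r ∈ range (i+j+1-x), (-1:SymF)^r * hh ((m:ℤ) + r) * Pe x (i+j-2*x) r :=
          lemmaB x (i+j-2*x) m (i+j+1-x) (by omega) _ (fun t => rfl)
      _ = ∑ r ∈ range (i+j+2), (-1:SymF)^r * hh ((m:ℤ) + r) * Pe x (i+j-2*x) r := by
          apply Finset.sum_subset (Finset.range_subset_range.mpr (by omega))
          intro r _ hr
          rw [Finset.mem_range, not_lt] at hr
          rw [Pe_zero x (i+j-2*x) r (by omega), mul_zero]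
  rw [hL, Finset.sum_congr rfl hR1, Finset.sum_congr rfl hR2]
  -- swap sums
  have hQsum : ∑ x ∈ range (min i (j+1)),
      (∑ r ∈ range (i+j+2), (-1:SymF)^r * hh ((m:ℤ) + 1 + r) * Pe x (i+j-1-2*x) r)
      = ∑ r ∈ range (i+j+2), (-1:SymF)^r * hh ((m:ℤ) + 1 + r) * Qf i j r := by
    rw [Finset.sum_comm]
    exact Finset.sum_congr rfl fun r _ => by rw [Qf, Finset.mul_sum]
  have hRsum : ∑ x ∈ range (min i j + 1),
      (∑ r ∈ range (i+j+2), (-1:SymF)^r * hh ((m:ℤ) + r) * Pe x (i+j-2*x) r)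
      = ∑ r ∈ range (i+j+2), (-1:SymF)^r * hh ((m:ℤ) + r) * Rf i j r := by
    rw [Finset.sum_comm]
    exact Finset.sum_congr rfl fun r _ => by rw [Rf, Finset.mul_sum]
  rw [hQsum, hRsum]
  -- key pointwise identity
  have hkey : ∀ r : ℕ, E (i:ℤ) * E ((j:ℤ) - r)
      = Rf i j r - (if r = 0 then 0 else Qf i j (r-1)) := by
    intro r
    cases r with
    | zero =>
        rw [if_pos rfl, sub_zero, key0 i j]
        norm_num
    | succ t =>
        rw [if_neg (Nat.succ_ne_zero t), show t + 1 - 1 = t from rfl, keyS i j t]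
        congr 2
        push_cast
        ring
  -- the ite-sum evaluates to minus the shifted Q-sum
  have hite : ∑ r ∈ range (i+j+2), (-1:SymF)^r * hh ((m:ℤ) + r) * (if r = 0 then 0 else Qf i j (r-1))
      = - ∑ t ∈ range (i+j+1), (-1:SymF)^t * hh ((m:ℤ) + 1 + t) * Qf i j t := by
    rw [Finset.sum_range_succ']
    have h0 : (-1:SymF)^(0:ℕ) * hh ((m:ℤ) + ((0:ℕ):ℤ)) * (if (0:ℕ) = 0 then 0 else Qf i j (0-1)) = 0 := by
      rw [if_pos rfl, mul_zero]
    rw [h0, add_zero]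
    rw [show (∑ t ∈ range (i+j+1), (-1:SymF)^(t+1) * hh ((m:ℤ) + ((t+1:ℕ):ℤ)) *
          (if (t+1:ℕ) = 0 then 0 else Qf i j (t+1-1)))
        = ∑ t ∈ range (i+j+1), -((-1:SymF)^t * hh ((m:ℤ) + 1 + t) * Qf i j t) from
      Finset.sum_congr rfl fun t _ => by
        rw [if_neg (Nat.succ_ne_zero t), show t + 1 - 1 = t from rfl, pow_succ,
          show (m:ℤ) + ((t+1:ℕ):ℤ) = (m:ℤ) + 1 + t by push_cast; ring]
        ring]
    rw [Finset.sum_neg_distrib]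
  -- top coefficient of Q vanishes
  have hQtop : Qf i j (i+j+1) = 0 := by
    rw [Qf]
    apply Finset.sum_eq_zero
    intro x hx
    rw [Finset.mem_range] at hx
    exact Pe_zero _ _ _ (by omega)
  -- finish
  calc ∑ r ∈ range (i+j+2), (-1:SymF)^r * hh ((m:ℤ) + r) * (E (i:ℤ) * E ((j:ℤ) - r))
      = ∑ r ∈ range (i+j+2), ((-1:SymF)^r * hh ((m:ℤ) + r) * Rf i j r
          - (-1:SymF)^r * hh ((m:ℤ) + r) * (if r = 0 then 0 else Qf i j (r-1))) :=
        Finset.sum_congr rfl fun r _ => by rw [hkey r]; ring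
    _ = (∑ r ∈ range (i+j+2), (-1:SymF)^r * hh ((m:ℤ) + r) * Rf i j r)
          - ∑ r ∈ range (i+j+2), (-1:SymF)^r * hh ((m:ℤ) + r) * (if r = 0 then 0 else Qf i j (r-1)) :=
        Finset.sum_sub_distrib _ _
    _ = (∑ r ∈ range (i+j+2), (-1:SymF)^r * hh ((m:ℤ) + r) * Rf i j r)
          + ∑ t ∈ range (i+j+1), (-1:SymF)^t * hh ((m:ℤ) + 1 + t) * Qf i j t := by
        rw [hite]; ring
    _ = (∑ r ∈ range (i+j+2), (-1:SymF)^r * hh ((m:ℤ) + 1 + r) * Qf i j r)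
          + ∑ r ∈ range (i+j+2), (-1:SymF)^r * hh ((m:ℤ) + r) * Rf i j r := by
        rw [Finset.sum_range_succ (fun r => (-1:SymF)^r * hh ((m:ℤ) + 1 + r) * Qf i j r) (i+j+1),
          hQtop, mul_zero, add_zero]
        ring
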